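/- Let C be a Hermitian positive definite matrix indexed by a finite set Λ partitioned as Λ = {x₀} ∪ Λ₁ ∪ Λ₂ (disjoint). Define a = inf over functions f supported on Λ₁ of (e_{x₀}-f)* C (e_{x₀}-f) and b = inf over functions g supported on Λ₂ of (e_{x₀}-g)* C⁻¹ (e_{x₀}-g). Then a·b = 1. -/

import Mathlib

open Matrix ComplexOrder

private lemma sum_restrict {Λ : Type*} [Fintype Λ] {P : Λ → Prop} [DecidablePred P]
    (g : Λ → ℂ) (hg : ∀ x, ¬P x → g x = 0) :
    ∑ x, g x = ∑ t : {x // P x}, g t := by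
  classical
  rw [← Finset.sum_filter_add_sum_filter_not Finset.univ P g]
  have h2 : ∑ x ∈ Finset.univ.filter (fun x => ¬ P x), g x = 0 :=
    Finset.sum_eq_zero fun x hx => hg x (Finset.mem_filter.mp hx).2
  rw [h2, add_zero]
  exact Finset.sum_subtype _ (by simp) g

private lemma dot_zero {Λ : Type*} [Fintype Λ] (d u : Λ → ℂ)
    (h : ∀ x, d x = 0 ∨ u x = 0) : star d ⬝ᵥ u = 0 := by
  simp only [dotProduct, Pi.star_apply]
  refine Finset.sum_eq_zero fun x _ => ?_
  rcases h x with h | h <;> simp [h]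

private lemma inf_lemma {Λ : Type*} [Fintype Λ] [DecidableEq Λ]
    (M : Matrix Λ Λ ℂ) (hM : M.PosSemidef) (x₀ : Λ) (S : Set Λ)
    (v : Λ → ℂ) (hv : ∀ x ∉ S, v x = (Pi.single x₀ 1 : Λ → ℂ) x)
    (hMv : ∀ x ∈ S, (M *ᵥ v) x = 0) :
    sInf {r : ℝ | ∃ f : Λ → ℂ, (∀ x ∉ S, f x = 0) ∧
      r = (star (Pi.single x₀ 1 - f) ⬝ᵥ (M *ᵥ (Pi.single x₀ 1 - f))).re}
      = (star v ⬝ᵥ (M *ᵥ v)).re := by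
  classical
  have key : ∀ f : Λ → ℂ, (∀ x ∉ S, f x = 0) →
      (star v ⬝ᵥ (M *ᵥ v)).re ≤ (star (Pi.single x₀ 1 - f) ⬝ᵥ (M *ᵥ (Pi.single x₀ 1 - f))).re := by
    intro f hf
    set d : Λ → ℂ := (Pi.single x₀ 1 - f) - v with hd
    have hdS : ∀ x ∉ S, d x = 0 := by
      intro x hx
      simp [hd, hf x hx, hv x hx]
    have hsplit : Pi.single x₀ 1 - f = v + d := by simp [hd]
    have h1 : star d ⬝ᵥ (M *ᵥ v) = 0 := by
      refine dot_zero _ _ fun x => ?_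
      by_cases hx : x ∈ S
      · exact Or.inr (hMv x hx)
      · exact Or.inl (hdS x hx)
    have h2 : star v ⬝ᵥ (M *ᵥ d) = 0 := by
      have hrw : star v ⬝ᵥ (M *ᵥ d) = star (M *ᵥ v) ⬝ᵥ d := by
        rw [star_mulVec, hM.1, dotProduct_mulVec]
      rw [hrw]
      refine dot_zero _ _ fun x => ?_
      by_cases hx : x ∈ S
      · exact Or.inl (hMv x hx)
      · exact Or.inr (hdS x hx)
    have h3 : (0:ℝ) ≤ (star d ⬝ᵥ (M *ᵥ d)).re := by
      have := hM.dotProduct_mulVec_nonneg d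
      exact (Complex.le_def.mp this).1
    rw [hsplit]
    have : star (v + d) ⬝ᵥ (M *ᵥ (v + d))
        = star v ⬝ᵥ (M *ᵥ v) + star v ⬝ᵥ (M *ᵥ d) + star d ⬝ᵥ (M *ᵥ v) + star d ⬝ᵥ (M *ᵥ d) := by
      rw [star_add, mulVec_add, add_dotProduct, dotProduct_add, dotProduct_add]
      ring
    rw [this, h1, h2, add_zero, add_zero, Complex.add_re]
    linarith
  have hmem : (star v ⬝ᵥ (M *ᵥ v)).re ∈ {r : ℝ | ∃ f : Λ → ℂ, (∀ x ∉ S, f x = 0) ∧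
      r = (star (Pi.single x₀ 1 - f) ⬝ᵥ (M *ᵥ (Pi.single x₀ 1 - f))).re} := by
    refine ⟨Pi.single x₀ 1 - v, fun x hx => by simp [hv x hx], ?_⟩
    simp
  have hbdd : BddBelow {r : ℝ | ∃ f : Λ → ℂ, (∀ x ∉ S, f x = 0) ∧
      r = (star (Pi.single x₀ 1 - f) ⬝ᵥ (M *ᵥ (Pi.single x₀ 1 - f))).re} := by
    refine ⟨(star v ⬝ᵥ (M *ᵥ v)).re, ?_⟩
    rintro r ⟨f, hf, rfl⟩
    exact key f hf
  refine le_antisymm (csInf_le hbdd hmem) (le_csInf ⟨_, hmem⟩ ?_)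
  rintro r ⟨f, hf, rfl⟩
  exact key f hf

theorem stmt_0 {Λ : Type*} [Fintype Λ] [DecidableEq Λ]
    (C : Matrix Λ Λ ℂ) (hC : C.PosDef)
    (x₀ : Λ) (Λ₁ Λ₂ : Set Λ)
    (h1 : x₀ ∉ Λ₁) (h2 : x₀ ∉ Λ₂) (h12 : Disjoint Λ₁ Λ₂)
    (hcover : insert x₀ (Λ₁ ∪ Λ₂) = (Set.univ : Set Λ))
    (a b : ℝ)
    (ha : a = sInf {r : ℝ | ∃ f : Λ → ℂ, (∀ x ∉ Λ₁, f x = 0) ∧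
      r = (star (Pi.single x₀ 1 - f) ⬝ᵥ (C *ᵥ (Pi.single x₀ 1 - f))).re})
    (hb : b = sInf {r : ℝ | ∃ g : Λ → ℂ, (∀ x ∉ Λ₂, g x = 0) ∧
      r = (star (Pi.single x₀ 1 - g) ⬝ᵥ (C⁻¹ *ᵥ (Pi.single x₀ 1 - g))).re}) :
    a * b = 1 := by
  classical
  have hcov : ∀ x : Λ, x = x₀ ∨ x ∈ Λ₁ ∨ x ∈ Λ₂ := by
    intro x
    have : x ∈ insert x₀ (Λ₁ ∪ Λ₂) := by rw [hcover]; trivial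
    simpa [Set.mem_insert_iff, Set.mem_union] using this
  set P : Λ → Prop := fun x => x = x₀ ∨ x ∈ Λ₁ with hPdef
  letI : DecidablePred P := Classical.decPred P
  set D : Matrix {x // P x} {x // P x} ℂ := C.submatrix Subtype.val Subtype.val with hDdef
  -- extension helper
  have mulVec_ext : ∀ (M : Matrix Λ Λ ℂ) (u : {x // P x} → ℂ) (x : Λ),
      (M *ᵥ fun y => if h : P y then u ⟨y, h⟩ else 0) x
        = ∑ t : {y // P y}, M x t * u t := by
    intro M u x
    simp only [mulVec, dotProduct]
    rw [sum_restrict (P := P) (fun y => M x y * if h : P y then u ⟨y, h⟩ else 0)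
      (fun y hy => by simp only [dif_neg hy, mul_zero])]
    refine Finset.sum_congr rfl fun t _ => ?_
    simp only [dif_pos t.2]
  have hD : D.PosDef := by
    refine Matrix.PosDef.of_dotProduct_mulVec_pos ?_ ?_
    · exact hC.1.submatrix _
    · intro x hx
      set y : Λ → ℂ := fun z => if h : P z then x ⟨z, h⟩ else 0 with hy
      have hy0 : y ≠ 0 := by
        intro h0
        apply hx
        funext t
        have := congrFun h0 t.1
        simpa [hy, t.2] using this
      have hpos := hC.dotProduct_mulVec_pos hy0
      have heq : star y ⬝ᵥ (C *ᵥ y) = star x ⬝ᵥ (D *ᵥ x) := by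
        have : star y ⬝ᵥ (C *ᵥ y) = ∑ z, star (y z) * (C *ᵥ y) z := by
          simp [dotProduct]
        rw [this, sum_restrict (P := P) (fun z => star (y z) * (C *ᵥ y) z)
          (fun z hz => by simp only [hy, dif_neg hz]; simp)]
        simp only [dotProduct, mulVec]
        refine Finset.sum_congr rfl fun t _ => ?_
        have h1 : y t.1 = x t := by simp [hy, t.2]
        have h2 : (C *ᵥ y) t.1 = ∑ s : {z // P z}, C t.1 s * x s := mulVec_ext C x t.1
        simp only [mulVec, dotProduct] at h2
        rw [h1, h2]
        simp [hDdef, dotProduct]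
      rw [← heq]
      exact hpos
  have hx₀P : P x₀ := Or.inl rfl
  set x₀' : {x // P x} := ⟨x₀, hx₀P⟩ with hx₀'
  set c : ℂ := D⁻¹ x₀' x₀' with hc
  have hDinv : D⁻¹.PosDef := hD.inv
  have hcpos : 0 < c := by
    have hne : (Pi.single x₀' 1 : {x // P x} → ℂ) ≠ 0 := by
      intro h
      have := congrFun h x₀'
      simp at this
    have := hDinv.dotProduct_mulVec_pos hne
    have heq : star (Pi.single x₀' (1:ℂ)) ⬝ᵥ (D⁻¹ *ᵥ Pi.single x₀' 1) = c := by
      rw [mulVec_single]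
      simp [dotProduct, Pi.single_apply, Finset.sum_ite_eq']
      rfl
    rwa [heq] at this
  have hcim : c.im = 0 := ((Complex.lt_def.mp hcpos).2).symm
  set r : ℝ := c.re with hr
  have hrpos : 0 < r := (Complex.lt_def.mp hcpos).1
  have hcr : c = (r : ℂ) := Complex.ext rfl (by simp [hcim])
  have hc0 : c ≠ 0 := ne_of_gt hcpos
  set vT : {x // P x} → ℂ := fun t => D⁻¹ t x₀' / c with hvT
  set v : Λ → ℂ := fun x => if h : P x then vT ⟨x, h⟩ else 0 with hv
  have hDdet : IsUnit D.det := (Matrix.isUnit_iff_isUnit_det D).mp hD.isUnit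
  have hDD : D * D⁻¹ = 1 := Matrix.mul_nonsing_inv D hDdet
  have hDvT : D *ᵥ vT = fun t => (Pi.single x₀' 1 : {x // P x} → ℂ) t / c := by
    have h1 : vT = fun t => (D⁻¹ *ᵥ Pi.single x₀' 1) t / c := by
      funext t; rw [hvT]; simp [mulVec_single]
    have h2 : vT = c⁻¹ • (D⁻¹ *ᵥ Pi.single x₀' 1) := by
      rw [h1]; funext t; simp [div_eq_inv_mul, smul_eq_mul]
    rw [h2, mulVec_smul, mulVec_mulVec, hDD, one_mulVec]
    funext t
    simp [div_eq_inv_mul, smul_eq_mul]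
  have hCvP : ∀ (x : Λ) (hx : P x), (C *ᵥ v) x = (Pi.single x₀' 1 : {x // P x} → ℂ) ⟨x, hx⟩ / c := by
    intro x hx
    have := mulVec_ext C vT x
    rw [hv, this]
    have : (D *ᵥ vT) ⟨x, hx⟩ = ∑ t : {y // P y}, C x t * vT t := by
      simp [mulVec, dotProduct, hDdef]
    rw [← this, hDvT]
  have hCvx₀ : (C *ᵥ v) x₀ = c⁻¹ := by
    rw [hCvP x₀ hx₀P]
    simp [← hx₀', div_eq_inv_mul]
  have hCvΛ₁ : ∀ x ∈ Λ₁, (C *ᵥ v) x = 0 := by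
    intro x hx
    rw [hCvP x (Or.inr hx)]
    have hne : (⟨x, Or.inr hx⟩ : {x // P x}) ≠ x₀' := by
      intro h
      have hxx : x = x₀ := congrArg Subtype.val h
      exact h1 (hxx ▸ hx)
    rw [Pi.single_eq_of_ne hne]
    simp
  have hvx₀ : v x₀ = 1 := by
    rw [hv]
    simp only [dif_pos hx₀P]
    have : (⟨x₀, hx₀P⟩ : {x // P x}) = x₀' := rfl
    rw [this, hvT]
    exact div_self hc0
  have hvΛ₂ : ∀ x ∈ Λ₂, v x = 0 := by
    intro x hx
    have hnP : ¬ P x := by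
      rintro (rfl | hx1)
      · exact h2 hx
      · exact Set.disjoint_left.mp h12 hx1 hx
    rw [hv]; simp [hnP]
  -- value of a
  have hva : a = (c⁻¹).re := by
    rw [ha, inf_lemma C hC.posSemidef x₀ Λ₁ v ?hv hCvΛ₁]
    · have : star v ⬝ᵥ (C *ᵥ v) = c⁻¹ := by
        have hz : ∀ x, x ≠ x₀ → star (v x) * (C *ᵥ v) x = 0 := by
          intro x hx
          rcases hcov x with rfl | hx1 | hx2
          · exact absurd rfl hx
          · simp [hCvΛ₁ x hx1]
          · simp [hvΛ₂ x hx2]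
        have : star v ⬝ᵥ (C *ᵥ v) = star (v x₀) * (C *ᵥ v) x₀ := by
          simp only [dotProduct, Pi.star_apply]
          exact Finset.sum_eq_single x₀ (fun x _ hx => hz x hx) (by simp)
        rw [this, hvx₀, hCvx₀]
        simp
      rw [this]
    case hv =>
      intro x hx
      rcases hcov x with rfl | hx1 | hx2
      · rw [hvx₀, Pi.single_eq_same]
      · exact absurd hx1 hx
      · rw [hvΛ₂ x hx2, Pi.single_eq_of_ne (by rintro rfl; exact h2 hx2)]
  -- the dual minimizer
  set w : Λ → ℂ := c • (C *ᵥ v) with hw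
  have hCdet : IsUnit C.det := (Matrix.isUnit_iff_isUnit_det C).mp hC.isUnit
  have hCinvw : C⁻¹ *ᵥ w = c • v := by
    rw [hw, mulVec_smul, mulVec_mulVec, Matrix.nonsing_inv_mul C hCdet, one_mulVec]
  have hwx₀ : w x₀ = 1 := by
    rw [hw]
    simp only [Pi.smul_apply, smul_eq_mul, hCvx₀]
    exact mul_inv_cancel₀ hc0
  have hwΛ₁ : ∀ x ∈ Λ₁, w x = 0 := by
    intro x hx
    rw [hw]
    simp [hCvΛ₁ x hx]
  have hvb : b = c.re := by
    rw [hb, inf_lemma C⁻¹ hC.inv.posSemidef x₀ Λ₂ w ?hw ?hMw]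
    · have : star w ⬝ᵥ (C⁻¹ *ᵥ w) = c := by
        rw [hCinvw]
        have hz : ∀ x, x ≠ x₀ → star (w x) * (c • v) x = 0 := by
          intro x hx
          rcases hcov x with rfl | hx1 | hx2
          · exact absurd rfl hx
          · simp [hwΛ₁ x hx1]
          · simp [hvΛ₂ x hx2]
        have heq : star w ⬝ᵥ (c • v) = star (w x₀) * (c • v) x₀ := by
          simp only [dotProduct, Pi.star_apply]
          exact Finset.sum_eq_single x₀ (fun x _ hx => hz x hx) (by simp)
        rw [heq, hwx₀]
        simp [hvx₀]
      rw [this]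
    case hw =>
      intro x hx
      rcases hcov x with rfl | hx1 | hx2
      · rw [hwx₀, Pi.single_eq_same]
      · rw [hwΛ₁ x hx1, Pi.single_eq_of_ne (by rintro rfl; exact h1 hx1)]
      · exact absurd hx2 hx
    case hMw =>
      intro x hx
      rw [hCinvw]
      simp [hvΛ₂ x hx]
  rw [hva, hvb, hcr]
  rw [← Complex.ofReal_inv]
  simp only [Complex.ofReal_re]
  field_simp
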